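/- Let f : [0,1]ⁿ → ℝ be twice continuously differentiable. Then f is continuous submodular (i.e., f(x) + f(y) ≥ f(x ∨ y) + f(x ∧ y) for all x, y, with componentwise max/min) if and only if all off-diagonal entries of its Hessian are nonpositive everywhere: ∂²f/∂xᵢ∂xⱼ ≤ 0 for all i ≠ j and all x. -/

import Mathlib

open Set

lemma key_lower {g g' : ℝ → ℝ} {a b : ℝ} (hab : a ≤ b)
    (hg : ∀ t ∈ Set.Icc a b, HasDerivAt g (g' t) t) (c : ℝ)
    (hc : ∀ t ∈ Set.Icc a b, c ≤ g' t) : c * (b - a) ≤ g b - g a := by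
  set φ : ℝ → ℝ := fun t => g t - c * t with hφ
  have hφd : ∀ t ∈ Set.Icc a b, HasDerivAt φ (g' t - c) t := by
    intro t ht
    exact ((hg t ht).sub ((hasDerivAt_id t).const_mul c)).congr_deriv (by ring)
  have hmono : MonotoneOn φ (Set.Icc a b) := by
    apply monotoneOn_of_deriv_nonneg (convex_Icc a b)
    · exact fun t ht => ((hφd t ht).continuousAt).continuousWithinAt
    · intro t ht
      rw [interior_Icc] at ht
      exact ((hφd t (Ioo_subset_Icc_self ht)).differentiableAt).differentiableWithinAt
    · intro t ht
      rw [interior_Icc] at ht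
      rw [(hφd t (Ioo_subset_Icc_self ht)).deriv]
      linarith [hc t (Ioo_subset_Icc_self ht)]
  have := hmono (Set.left_mem_Icc.2 hab) (Set.right_mem_Icc.2 hab) hab
  simp only [hφ] at this
  nlinarith

lemma key_upper {g g' : ℝ → ℝ} {a b : ℝ} (hab : a ≤ b)
    (hg : ∀ t ∈ Set.Icc a b, HasDerivAt g (g' t) t)
    (hc : ∀ t ∈ Set.Icc a b, g' t ≤ 0) : g b ≤ g a := by
  have := key_lower hab (g' := fun t => -(g' t))
    (fun t ht => (hg t ht).neg) 0 (fun t ht => by simpa using hc t ht) (g := fun t => -(g t))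
  simp at this
  linarith

lemma bilin_sum {n : ℕ} (B : (Fin n → ℝ) →L[ℝ] (Fin n → ℝ) →L[ℝ] ℝ) (u w : Fin n → ℝ) :
    B u w = ∑ i, ∑ j, u i * w j * B (Pi.single i 1) (Pi.single j 1) := by
  conv_lhs => rw [← Finset.univ_sum_single u]
  rw [map_sum, ContinuousLinearMap.sum_apply]
  refine Finset.sum_congr rfl fun i _ => ?_
  conv_lhs => rw [← Finset.univ_sum_single w]
  rw [map_sum]
  refine Finset.sum_congr rfl fun j _ => ?_
  have hu : (Pi.single i (u i) : Fin n → ℝ) = u i • (Pi.single i 1 : Fin n → ℝ) := by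
    ext k; rcases eq_or_ne k i with h | h <;> simp [h, Pi.single_apply]
  have hw : (Pi.single j (w j) : Fin n → ℝ) = w j • (Pi.single j 1 : Fin n → ℝ) := by
    ext k; rcases eq_or_ne k j with h | h <;> simp [h, Pi.single_apply]
  rw [hu, hw, map_smul, map_smul]
  simp [smul_eq_mul]; ring

variable {n : ℕ} {f : (Fin n → ℝ) → ℝ}

lemma hG (hf : ContDiff ℝ 2 f) (w : Fin n → ℝ) (z : Fin n → ℝ) :
    HasFDerivAt (fun y => fderiv ℝ f y w) ((fderiv ℝ (fderiv ℝ f) z).flip w) z := by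
  have hd2 : Differentiable ℝ (fderiv ℝ f) :=
    (hf.fderiv_right (m := 1) (by norm_num)).differentiable one_ne_zero
  have := (hd2 z).hasFDerivAt.clm_apply (hasFDerivAt_const w z)
  simpa using this

lemma hess_eq (hf : ContDiff ℝ 2 f) (w v z : Fin n → ℝ) :
    fderiv ℝ (fun y => fderiv ℝ f y w) z v = (fderiv ℝ (fderiv ℝ f) z v) w := by
  rw [(hG hf w z).fderiv]; rfl

lemma hHcont (hf : ContDiff ℝ 2 f) (v w : Fin n → ℝ) :
    Continuous fun z => (fderiv ℝ (fderiv ℝ f) z v) w := by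
  have h2 : Continuous (fderiv ℝ (fderiv ℝ f)) :=
    ((hf.fderiv_right (m := 1) (by norm_num)).fderiv_right (m := 0)
      (by norm_num)).continuous
  exact (h2.clm_apply continuous_const).clm_apply continuous_const

lemma line_hasDerivAt (c u : Fin n → ℝ) (s : ℝ) :
    HasDerivAt (fun s : ℝ => c + s • u) u s := by
  simpa using ((hasDerivAt_id s).smul_const u).const_add c

lemma psi_hasDerivAt (hf : ContDiff ℝ 2 f) (c u w : Fin n → ℝ) (s : ℝ) :
    HasDerivAt (fun s : ℝ => fderiv ℝ f (c + s • u) w)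
      ((fderiv ℝ (fderiv ℝ f) (c + s • u) u) w) s := by
  have := (hG hf w (c + s • u)).comp_hasDerivAt s (line_hasDerivAt c u s)
  exact this

lemma f_line_hasDerivAt (hf : ContDiff ℝ 2 f) (c u : Fin n → ℝ) (s : ℝ) :
    HasDerivAt (fun s : ℝ => f (c + s • u)) (fderiv ℝ f (c + s • u) u) s := by
  have hd : Differentiable ℝ f := hf.differentiable (by norm_num)
  have := ((hd (c + s • u)).hasFDerivAt).comp_hasDerivAt s (line_hasDerivAt c u s)
  exact this

lemma dir1 (hf : ContDiff ℝ 2 f)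
    (hH : ∀ i j : Fin n, i ≠ j → ∀ z ∈ Set.Icc (0 : Fin n → ℝ) 1,
      (fderiv ℝ (fderiv ℝ f) z (Pi.single i 1)) (Pi.single j 1) ≤ 0) :
    ∀ x ∈ Set.Icc (0 : Fin n → ℝ) 1, ∀ y ∈ Set.Icc (0 : Fin n → ℝ) 1,
      f (x ⊔ y) + f (x ⊓ y) ≤ f x + f y := by
  intro x hx y hy
  set a : Fin n → ℝ := x ⊓ y with ha
  set u : Fin n → ℝ := x - a with hu'
  set v : Fin n → ℝ := y - a with hv'
  have hxau : x = a + u := by rw [hu']; abel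
  have hyav : y = a + v := by rw [hv']; abel
  have hak : ∀ k, a k = min (x k) (y k) := fun k => rfl
  have hu0 : ∀ k, 0 ≤ u k := fun k => by
    simp only [hu', Pi.sub_apply, hak, sub_nonneg]; exact min_le_left _ _
  have hv0 : ∀ k, 0 ≤ v k := fun k => by
    simp only [hv', Pi.sub_apply, hak, sub_nonneg]; exact min_le_right _ _
  have huv : ∀ k, u k * v k = 0 := by
    intro k
    rcases min_choice (x k) (y k) with h | h
    · have : u k = 0 := by simp [hu', hak, h]
      rw [this, zero_mul]
    · have : v k = 0 := by simp [hv', hak, h]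
      rw [this, mul_zero]
  have hsup : x ⊔ y = a + u + v := by
    funext k
    have := min_add_max (x k) (y k)
    have h1 : (x ⊔ y) k = max (x k) (y k) := rfl
    simp only [h1, Pi.add_apply, hu', hv', Pi.sub_apply, hak]
    linarith
  -- membership of all intermediate points
  have hmem : ∀ s ∈ Set.Icc (0:ℝ) 1, ∀ t ∈ Set.Icc (0:ℝ) 1,
      a + s • u + t • v ∈ Set.Icc (0 : Fin n → ℝ) 1 := by
    intro s hs t ht
    constructor <;> intro k
    · have h0 : (0:ℝ) ≤ a k := le_min (hx.1 k) (hy.1 k)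
      have := mul_nonneg hs.1 (hu0 k)
      have := mul_nonneg ht.1 (hv0 k)
      simp only [Pi.add_apply, Pi.smul_apply, smul_eq_mul, Pi.zero_apply]
      linarith
    · have h1 : a k + u k + v k ≤ 1 := by
        have := congrFun hsup k
        have hx1 : max (x k) (y k) ≤ 1 := max_le (hx.2 k) (hy.2 k)
        simp only [Pi.add_apply] at this
        have h1' : (x ⊔ y) k = max (x k) (y k) := rfl
        rw [h1'] at this
        linarith
      have hsu : s * u k ≤ u k := by nlinarith [hu0 k, hs.2]
      have htv : t * v k ≤ v k := by nlinarith [hv0 k, ht.2]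
      simp only [Pi.add_apply, Pi.smul_apply, smul_eq_mul, Pi.one_apply]
      linarith
  -- inner monotonicity: for t ∈ [0,1], Df((a+t•v)+u)(v) ≤ Df(a+t•v)(v)
  have inner : ∀ t ∈ Set.Icc (0:ℝ) 1,
      fderiv ℝ f ((a + t • v) + u) v ≤ fderiv ℝ f (a + t • v) v := by
    intro t ht
    have h10 := key_upper (g := fun s => fderiv ℝ f ((a + t • v) + s • u) v)
      (g' := fun s => (fderiv ℝ (fderiv ℝ f) ((a + t • v) + s • u) u) v)
      zero_le_one (fun s _ => psi_hasDerivAt hf (a + t • v) u v s) ?_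
    · simpa using h10
    · intro s hs
      have hpt : (a + t • v) + s • u = a + s • u + t • v := by abel
      simp only [hpt]
      rw [bilin_sum]
      apply Finset.sum_nonpos
      intro i _
      apply Finset.sum_nonpos
      intro j _
      rcases eq_or_ne i j with rfl | hij
      · rw [huv i, zero_mul]
      · exact mul_nonpos_of_nonneg_of_nonpos (mul_nonneg (hu0 i) (hv0 j))
          (hH i j hij _ (hmem s hs t ht))
  -- outer monotonicity
  have outer := key_upper (g := fun t => f ((a + u) + t • v) - f (a + t • v))
    (g' := fun t => fderiv ℝ f ((a + u) + t • v) v - fderiv ℝ f (a + t • v) v)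
    zero_le_one
    (fun t _ => (f_line_hasDerivAt hf (a + u) v t).sub (f_line_hasDerivAt hf a v t))
    ?_
  · have h1 : ((a + u) + (1:ℝ) • v) = a + u + v := by rw [one_smul]
    have h0 : ((a + u) + (0:ℝ) • v) = a + u := by rw [zero_smul, add_zero]
    simp only [h1, h0, zero_smul, add_zero, one_smul] at outer
    rw [hsup, hxau, hyav]
    linarith
  · intro t ht
    have hpt : (a + u) + t • v = (a + t • v) + u := by abel
    simp only [hpt]
    have := inner t ht
    linarith

lemma dir2 (hf : ContDiff ℝ 2 f)
    (hsub : ∀ x ∈ Set.Icc (0 : Fin n → ℝ) 1, ∀ y ∈ Set.Icc (0 : Fin n → ℝ) 1,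
      f (x ⊔ y) + f (x ⊓ y) ≤ f x + f y) :
    ∀ i j : Fin n, i ≠ j → ∀ x ∈ Set.Icc (0 : Fin n → ℝ) 1,
      (fderiv ℝ (fderiv ℝ f) x (Pi.single i 1)) (Pi.single j 1) ≤ 0 := by
  intro i j hij x hx
  by_contra hpos
  push_neg at hpos
  set H : (Fin n → ℝ) → ℝ := fun z => (fderiv ℝ (fderiv ℝ f) z (Pi.single i 1)) (Pi.single j 1)
    with hHdef
  set c : ℝ := H x / 2 with hcdef
  have hc : 0 < c := by simpa [hcdef] using half_pos hpos
  have hcont : Continuous H := hHcont hf _ _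
  have h1 : ∀ᶠ z in nhds x, c < H z :=
    hcont.continuousAt.eventually_const_lt (by simp [hcdef]; linarith)
  rw [Metric.eventually_nhds_iff] at h1
  obtain ⟨δ, hδ, hball⟩ := h1
  set ε : ℝ := min (δ/2) 1 with hεdef
  have hε : 0 < ε := lt_min (by linarith) one_pos
  have hε1 : ε ≤ 1 := min_le_right _ _
  have hεδ : ε < δ := lt_of_le_of_lt (min_le_left _ _) (by linarith)
  set a : Fin n → ℝ :=
    Function.update (Function.update x i (min (x i) (1 - ε))) j (min (x j) (1 - ε)) with hadef
  have hai : a i = min (x i) (1 - ε) := by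
    rw [hadef, Function.update_of_ne hij, Function.update_self]
  have haj : a j = min (x j) (1 - ε) := by rw [hadef, Function.update_self]
  have hak : ∀ k, k ≠ i → k ≠ j → a k = x k := by
    intro k hki hkj
    rw [hadef, Function.update_of_ne hkj, Function.update_of_ne hki]
  -- coordinates of points a + s•eᵢ + t•eⱼ
  have hcoord : ∀ s t : ℝ, ∀ k,
      (a + s • (Pi.single i 1 : Fin n → ℝ) + t • (Pi.single j 1 : Fin n → ℝ)) k
        = if k = i then a i + s else if k = j then a j + t else x k := by
    intro s t k
    simp only [Pi.add_apply, Pi.smul_apply, smul_eq_mul, Pi.single_apply]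
    rcases eq_or_ne k i with rfl | hki
    · simp [hij, Ne.symm hij]
    · rcases eq_or_ne k j with rfl | hkj
      · simp [hki]
      · simp [hki, hkj, hak k hki hkj]
  have hx0 : ∀ k, 0 ≤ x k := by
    have := hx.1; rw [Pi.le_def] at this; intro k; simpa using this k
  have hx1 : ∀ k, x k ≤ 1 := by
    have := hx.2; rw [Pi.le_def] at this; intro k; simpa using this k
  have haix : x i - ε ≤ a i ∧ a i ≤ x i := by
    refine ⟨?_, by rw [hai]; exact min_le_left _ _⟩
    rw [hai]; rcases le_total (x i) (1-ε) with h | h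
    · rw [min_eq_left h]; linarith
    · rw [min_eq_right h]; linarith [hx1 i]
  have hajx : x j - ε ≤ a j ∧ a j ≤ x j := by
    refine ⟨?_, by rw [haj]; exact min_le_left _ _⟩
    rw [haj]; rcases le_total (x j) (1-ε) with h | h
    · rw [min_eq_left h]; linarith
    · rw [min_eq_right h]; linarith [hx1 j]
  have hai0 : 0 ≤ a i := by rw [hai]; exact le_min (hx0 i) (by linarith)
  have haj0 : 0 ≤ a j := by rw [haj]; exact le_min (hx0 j) (by linarith)
  have hai1 : a i + ε ≤ 1 := by rw [hai]; linarith [min_le_right (x i) (1-ε)]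
  have haj1 : a j + ε ≤ 1 := by rw [haj]; linarith [min_le_right (x j) (1-ε)]
  -- membership and distance of intermediate points
  have hmem : ∀ s ∈ Set.Icc (0:ℝ) ε, ∀ t ∈ Set.Icc (0:ℝ) ε,
      (a + s • (Pi.single i 1 : Fin n → ℝ) + t • (Pi.single j 1 : Fin n → ℝ))
        ∈ Set.Icc (0 : Fin n → ℝ) 1 := by
    intro s hs t ht
    constructor <;> rw [Pi.le_def] <;> intro k <;> rw [hcoord s t k]
    · rcases eq_or_ne k i with rfl | hki
      · simp only [eq_self_iff_true, if_true, Pi.zero_apply]; linarith [hs.1]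
      · rw [if_neg hki]
        rcases eq_or_ne k j with rfl | hkj
        · simp only [eq_self_iff_true, if_true, Pi.zero_apply]; linarith [ht.1]
        · rw [if_neg hkj]; simpa using hx0 k
    · rcases eq_or_ne k i with rfl | hki
      · simp only [eq_self_iff_true, if_true, Pi.one_apply]; linarith [hs.2]
      · rw [if_neg hki]
        rcases eq_or_ne k j with rfl | hkj
        · simp only [eq_self_iff_true, if_true, Pi.one_apply]; linarith [ht.2]
        · rw [if_neg hkj]; simpa using hx1 k
  have hdist : ∀ s ∈ Set.Icc (0:ℝ) ε, ∀ t ∈ Set.Icc (0:ℝ) ε,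
      c < H (a + s • (Pi.single i 1 : Fin n → ℝ) + t • (Pi.single j 1 : Fin n → ℝ)) := by
    intro s hs t ht
    apply hball
    have hle : dist (a + s • (Pi.single i 1 : Fin n → ℝ)
        + t • (Pi.single j 1 : Fin n → ℝ)) x ≤ ε := by
      rw [dist_pi_le_iff hε.le]
      intro k
      rw [Real.dist_eq, hcoord s t k]
      rcases eq_or_ne k i with rfl | hki
      · rw [if_pos rfl, abs_le]
        exact ⟨by linarith [haix.1, hs.1], by linarith [haix.2, hs.2]⟩
      · rw [if_neg hki]
        rcases eq_or_ne k j with rfl | hkj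
        · rw [if_pos rfl, abs_le]
          exact ⟨by linarith [hajx.1, ht.1], by linarith [hajx.2, ht.2]⟩
        · rw [if_neg hkj]; simpa using hε.le
    linarith [hle, hεδ]
  -- submodularity inequality at the four corner points
  have hsε : (ε : ℝ) ∈ Set.Icc (0:ℝ) ε := ⟨hε.le, le_rfl⟩
  have hs0 : (0 : ℝ) ∈ Set.Icc (0:ℝ) ε := ⟨le_rfl, hε.le⟩
  set ei : Fin n → ℝ := Pi.single i 1 with heidef
  set ej : Fin n → ℝ := Pi.single j 1 with hejdef
  have hsup' : (a + ε • ei + (0:ℝ) • ej) ⊔ (a + (0:ℝ) • ei + ε • ej)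
      = a + ε • ei + ε • ej := by
    funext k
    have h1 := hcoord ε 0 k
    have h2 := hcoord 0 ε k
    have h3 := hcoord ε ε k
    rw [Pi.sup_apply, h1, h2, h3]
    rcases eq_or_ne k i with rfl | hki
    · simp only [eq_self_iff_true, if_true]
      exact sup_eq_left.mpr (by linarith)
    · rcases eq_or_ne k j with rfl | hkj
      · simp only [if_neg hki, eq_self_iff_true, if_true]
        exact sup_eq_right.mpr (by linarith)
      · simp [hki, hkj]
  have hinf' : (a + ε • ei + (0:ℝ) • ej) ⊓ (a + (0:ℝ) • ei + ε • ej)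
      = a + (0:ℝ) • ei + (0:ℝ) • ej := by
    funext k
    have h1 := hcoord ε 0 k
    have h2 := hcoord 0 ε k
    have h3 := hcoord 0 0 k
    rw [Pi.inf_apply, h1, h2, h3]
    rcases eq_or_ne k i with rfl | hki
    · simp only [eq_self_iff_true, if_true]
      exact inf_eq_right.mpr (by linarith)
    · rcases eq_or_ne k j with rfl | hkj
      · simp only [if_neg hki, eq_self_iff_true, if_true]
        exact inf_eq_left.mpr (by linarith)
      · simp [hki, hkj]
  have hΔ := hsub _ (hmem ε hsε 0 hs0) _ (hmem 0 hs0 ε hsε)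
  rw [hsup', hinf'] at hΔ
  simp only [zero_smul, add_zero] at hΔ
  -- hΔ : f (a + ε•ei + ε•ej) + f a ≤ f (a + ε•ei) + f (a + ε•ej)
  -- lower bound via second derivative
  have hginner : ∀ t ∈ Set.Icc (0:ℝ) ε,
      c * ε ≤ fderiv ℝ f ((a + ε • ei) + t • ej) ej - fderiv ℝ f (a + t • ej) ej := by
    intro t ht
    have hkl := key_lower (g := fun s => fderiv ℝ f ((a + t • ej) + s • ei) ej)
      (g' := fun s => (fderiv ℝ (fderiv ℝ f) ((a + t • ej) + s • ei) ei) ej)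
      hε.le (fun s _ => psi_hasDerivAt hf (a + t • ej) ei ej s) c ?_
    · have hp1 : (a + t • ej) + ε • ei = (a + ε • ei) + t • ej := by abel
      have hp0 : (a + t • ej) + (0:ℝ) • ei = a + t • ej := by
        rw [zero_smul, add_zero]
      rw [hp1, hp0] at hkl
      linarith
    · intro s hs
      have hpt : (a + t • ej) + s • ei = a + s • ei + t • ej := by abel
      simp only [hpt]
      exact (hdist s hs t ht).le
  have houter := key_lower (g := fun t => f ((a + ε • ei) + t • ej) - f (a + t • ej))
    (g' := fun t => fderiv ℝ f ((a + ε • ei) + t • ej) ej - fderiv ℝ f (a + t • ej) ej)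
    hε.le
    (fun t _ => (f_line_hasDerivAt hf (a + ε • ei) ej t).sub (f_line_hasDerivAt hf a ej t))
    (c * ε) hginner
  simp only [zero_smul, add_zero] at houter
  nlinarith [mul_pos hc hε, mul_pos (mul_pos hc hε) hε]

/-- A twice continuously differentiable function on `[0,1]ⁿ` is continuous
submodular iff all off-diagonal entries of its Hessian are nonpositive there. -/
theorem continuous_submodular_iff_hessian_offdiag_nonpos
    {n : ℕ} (f : (Fin n → ℝ) → ℝ) (hf : ContDiff ℝ 2 f) :
    (∀ x ∈ Set.Icc (0 : Fin n → ℝ) 1, ∀ y ∈ Set.Icc (0 : Fin n → ℝ) 1,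
        f (x ⊔ y) + f (x ⊓ y) ≤ f x + f y) ↔
      (∀ i j : Fin n, i ≠ j → ∀ x ∈ Set.Icc (0 : Fin n → ℝ) 1,
        fderiv ℝ (fun y => fderiv ℝ f y (Pi.single j 1)) x (Pi.single i 1) ≤ 0) := by
  constructor
  · intro hsub i j hij x hx
    rw [hess_eq hf]
    exact dir2 hf hsub i j hij x hx
  · intro hH
    apply dir1 hf
    intro i j hij z hz
    rw [← hess_eq hf]
    exact hH i j hij z hz
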